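/- There exists a constant c > 0 such that for every n, every p ≤ 2/n, and every positive integer t, the exploration process of G(n,p) satisfies P( N_t ≤ n − 5t ) ≤ e^{−c t}. -/

import Mathlib

open MeasureTheory Finset Filter

noncomputable def bernoulliMeasure (p : ℝ) : Measure Bool :=
  (ENNReal.ofReal p) • Measure.dirac true + (ENNReal.ofReal (1 - p)) • Measure.dirac false

instance (p : ℝ) : IsFiniteMeasure (bernoulliMeasure p) := by
  constructor
  simp only [bernoulliMeasure, Measure.add_apply, Measure.smul_apply, smul_eq_mul,
    Measure.dirac_apply' _ MeasurableSet.univ, Set.indicator_univ, Pi.one_apply, mul_one]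
  exact ENNReal.add_lt_top.2 ⟨ENNReal.ofReal_lt_top, ENNReal.ofReal_lt_top⟩

noncomputable def gnp (n : ℕ) (p : ℝ) : Measure (Sym2 (Fin n) → Bool) :=
  Measure.pi fun _ => bernoulliMeasure p

def graphOfConfig {n : ℕ} (ω : Sym2 (Fin n) → Bool) : SimpleGraph (Fin n) where
  Adj v w := v ≠ w ∧ ω s(v, w) = true
  symm := ⟨fun v w h => ⟨h.1.symm, by rw [Sym2.eq_swap]; exact h.2⟩⟩
  loopless := ⟨fun v h => h.1 rfl⟩

noncomputable def nthLargestCompSize {V : Type*} (G : SimpleGraph V) (l : ℕ) : ℕ :=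
  sSup {k : ℕ | l ≤ {c : G.ConnectedComponent | k ≤ c.supp.ncard}.ncard}

inductive VStatus where
  | explored : VStatus
  | active : VStatus
  | neutral : VStatus
deriving DecidableEq

def exploreTarget {n : ℕ} (σ : Fin n → VStatus) : Option (Fin n) :=
  let act := Finset.univ.filter fun v => σ v = VStatus.active
  let neu := Finset.univ.filter fun v => σ v = VStatus.neutral
  if ha : act.Nonempty then some (act.min' ha)
  else if hn : neu.Nonempty then some (neu.min' hn)
  else none

open scoped Classical in
noncomputable def exploreStep {n : ℕ} (G : SimpleGraph (Fin n)) (σ : Fin n → VStatus) :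
    Fin n → VStatus :=
  match exploreTarget σ with
  | none => σ
  | some w => fun v =>
      if v = w then VStatus.explored
      else if σ v = VStatus.neutral ∧ G.Adj w v then VStatus.active
      else σ v

noncomputable def exploreState {n : ℕ} (G : SimpleGraph (Fin n)) (t : ℕ) : Fin n → VStatus :=
  (exploreStep G)^[t] (fun v => if v.val = 0 then VStatus.active else VStatus.neutral)

noncomputable def activeCount {n : ℕ} (G : SimpleGraph (Fin n)) (t : ℕ) : ℕ :=
  (Finset.univ.filter fun v => exploreState G t v = VStatus.active).card

noncomputable def neutralCount {n : ℕ} (G : SimpleGraph (Fin n)) (t : ℕ) : ℕ :=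
  (Finset.univ.filter fun v => exploreState G t v = VStatus.neutral).card

open scoped Classical in
noncomputable def etaVal {n : ℕ} (G : SimpleGraph (Fin n)) (t : ℕ) : ℕ :=
  match exploreTarget (exploreState G (t - 1)) with
  | none => 0
  | some w => (Finset.univ.filter fun v =>
      exploreState G (t - 1) v = VStatus.neutral ∧ G.Adj w v).card

-- ==================== auxiliary development ====================

abbrev Cfg (n : ℕ) := Sym2 (Fin n) → Bool

variable {n : ℕ}

lemma exploreStep_none {G : SimpleGraph (Fin n)} {σ : Fin n → VStatus}
    (h : exploreTarget σ = none) : exploreStep G σ = σ := by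
  simp [exploreStep, h]

lemma target_not_explored {σ : Fin n → VStatus} {w : Fin n}
    (h : exploreTarget σ = some w) : σ w ≠ VStatus.explored := by
  unfold exploreTarget at h
  simp only at h
  split_ifs at h with h1 h2
  · obtain rfl : _ = w := Option.some.inj h
    have := Finset.min'_mem _ h1
    simp only [Finset.mem_filter] at this
    simp [this.2]
  · obtain rfl : _ = w := Option.some.inj h
    have := Finset.min'_mem _ h2
    simp only [Finset.mem_filter] at this
    simp [this.2]

lemma target_explored_next {G : SimpleGraph (Fin n)} {σ : Fin n → VStatus} {w : Fin n}
    (h : exploreTarget σ = some w) : exploreStep G σ w = VStatus.explored := by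
  simp [exploreStep, h]

open scoped Classical in
lemma exploreStep_cases (G : SimpleGraph (Fin n)) (σ : Fin n → VStatus) (v : Fin n) :
    exploreStep G σ v = σ v ∨
      ∃ w, exploreTarget σ = some w ∧
        ((v = w ∧ exploreStep G σ v = VStatus.explored) ∨
          (σ v = VStatus.neutral ∧ G.Adj w v ∧ exploreStep G σ v = VStatus.active)) := by
  unfold exploreStep
  cases h : exploreTarget σ with
  | none => exact Or.inl rfl
  | some w =>
    simp only
    by_cases hv : v = w
    · exact Or.inr ⟨w, rfl, Or.inl ⟨hv, by simp [hv]⟩⟩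
    · by_cases hc : σ v = VStatus.neutral ∧ G.Adj w v
      · exact Or.inr ⟨w, rfl, Or.inr ⟨hc.1, hc.2, by rw [if_neg hv, if_pos hc]⟩⟩
      · exact Or.inl (by rw [if_neg hv, if_neg hc])

lemma step_neutral {G : SimpleGraph (Fin n)} {σ : Fin n → VStatus} {v : Fin n}
    (h : exploreStep G σ v = VStatus.neutral) : σ v = VStatus.neutral := by
  rcases exploreStep_cases G σ v with h' | ⟨w, _, ⟨_, h'⟩ | ⟨h', _, _⟩⟩
  · rw [← h', h]
  · rw [h] at h'; exact absurd h' (by simp)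
  · exact h'

lemma step_explored {G : SimpleGraph (Fin n)} {σ : Fin n → VStatus} {v : Fin n}
    (h : σ v = VStatus.explored) : exploreStep G σ v = VStatus.explored := by
  rcases exploreStep_cases G σ v with h' | ⟨w, _, ⟨_, h'⟩ | ⟨h', _, _⟩⟩
  · rw [h', h]
  · exact h'
  · rw [h] at h'; exact absurd h' (by simp)

lemma exploreState_succ (G : SimpleGraph (Fin n)) (t : ℕ) :
    exploreState G (t + 1) = exploreStep G (exploreState G t) :=
  Function.iterate_succ_apply' _ _ _

lemma state_neutral_anti (G : SimpleGraph (Fin n)) {s t : ℕ} (h : s ≤ t) {v : Fin n}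
    (hv : exploreState G t v = VStatus.neutral) : exploreState G s v = VStatus.neutral := by
  induction t with
  | zero => exact (Nat.le_zero.mp h) ▸ hv
  | succ t ih =>
    rcases Nat.lt_or_ge s (t+1) with hs | hs
    · exact ih (Nat.lt_succ_iff.mp hs) (step_neutral (by rwa [← exploreState_succ]))
    · exact (Nat.le_antisymm h hs) ▸ hv

lemma state_explored_mono (G : SimpleGraph (Fin n)) {s t : ℕ} (h : s ≤ t) {v : Fin n}
    (hv : exploreState G s v = VStatus.explored) : exploreState G t v = VStatus.explored := by
  induction t with
  | zero => exact (Nat.le_zero.mp h) ▸ hv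
  | succ t ih =>
    rcases Nat.lt_or_ge s (t+1) with hs | hs
    · rw [exploreState_succ]; exact step_explored (ih (Nat.lt_succ_iff.mp hs))
    · exact (Nat.le_antisymm h hs) ▸ hv

example : True := trivial

def freshEdges (σ : Fin n → VStatus) : Finset (Sym2 (Fin n)) :=
  match exploreTarget σ with
  | none => ∅
  | some w => (Finset.univ.filter fun v => σ v = VStatus.neutral ∧ v ≠ w).image fun v => s(w, v)

lemma mem_freshEdges {σ : Fin n → VStatus} {e : Sym2 (Fin n)} :
    e ∈ freshEdges σ ↔ ∃ w v, exploreTarget σ = some w ∧ σ v = VStatus.neutral ∧ v ≠ w ∧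
      e = s(w, v) := by
  unfold freshEdges
  cases h : exploreTarget σ with
  | none => simp [h]
  | some w =>
    simp only [Finset.mem_image, Finset.mem_filter, Finset.mem_univ, true_and, h]
    constructor
    · rintro ⟨v, ⟨h1, h2⟩, rfl⟩; exact ⟨w, v, rfl, h1, h2, rfl⟩
    · rintro ⟨w', v, hw', h1, h2, rfl⟩
      obtain rfl : w = w' := by simpa using hw'
      exact ⟨v, ⟨h1, h2⟩, rfl⟩

noncomputable def revealedSet (ω : Cfg n) : ℕ → Finset (Sym2 (Fin n))
  | 0 => ∅
  | t + 1 => revealedSet ω t ∪ freshEdges (exploreState (graphOfConfig ω) t)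

@[simp] lemma revealedSet_zero (ω : Cfg n) : revealedSet ω 0 = ∅ := rfl

lemma revealedSet_succ (ω : Cfg n) (t : ℕ) :
    revealedSet ω (t + 1) = revealedSet ω t ∪ freshEdges (exploreState (graphOfConfig ω) t) := rfl

lemma fresh_disjoint (G : SimpleGraph (Fin n)) {i j : ℕ} (hij : j < i) :
    Disjoint (freshEdges (exploreState G i)) (freshEdges (exploreState G j)) := by
  rw [Finset.disjoint_left]
  intro e hei hej
  obtain ⟨wi, v, hwi, hv, hvne, rfl⟩ := mem_freshEdges.mp hei
  obtain ⟨wj, u, hwj, hu, hune, he⟩ := mem_freshEdges.mp hej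
  have hexp : exploreState G i wj = VStatus.explored := by
    have h1 : exploreState G (j+1) wj = VStatus.explored := by
      rw [exploreState_succ]; exact target_explored_next hwj
    exact state_explored_mono G hij h1
  rw [Sym2.eq_iff] at he
  rcases he with ⟨rfl, rfl⟩ | ⟨rfl, rfl⟩
  · exact target_not_explored hwi hexp
  · rw [hv] at hexp; exact absurd hexp (by simp)

lemma fresh_disjoint_revealed (ω : Cfg n) {i t : ℕ} (ht : t ≤ i) :
    Disjoint (freshEdges (exploreState (graphOfConfig ω) i)) (revealedSet ω t) := by
  induction t with
  | zero => simp
  | succ t ih =>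
    rw [revealedSet_succ, Finset.disjoint_union_right]
    exact ⟨ih (Nat.le_of_succ_le ht), fresh_disjoint _ (Nat.lt_of_succ_le ht)⟩

lemma agree_state (t : ℕ) (ω₀ ω : Cfg n) (h : ∀ e ∈ revealedSet ω₀ t, ω e = ω₀ e) :
    exploreState (graphOfConfig ω) t = exploreState (graphOfConfig ω₀) t ∧
      revealedSet ω t = revealedSet ω₀ t := by
  induction t with
  | zero => exact ⟨rfl, rfl⟩
  | succ t ih =>
    have hsub : ∀ e ∈ revealedSet ω₀ t, ω e = ω₀ e := fun e he =>
      h e (by rw [revealedSet_succ]; exact Finset.mem_union_left _ he)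
    obtain ⟨hstate, hrev⟩ := ih hsub
    have hfresh : ∀ e ∈ freshEdges (exploreState (graphOfConfig ω₀) t), ω e = ω₀ e := fun e he =>
      h e (by rw [revealedSet_succ]; exact Finset.mem_union_right _ he)
    have hstep : exploreState (graphOfConfig ω) (t+1) = exploreState (graphOfConfig ω₀) (t+1) := by
      rw [exploreState_succ, exploreState_succ, hstate]
      set σ := exploreState (graphOfConfig ω₀) t with hσ
      unfold exploreStep
      cases hw : exploreTarget σ with
      | none => rfl
      | some w =>
        simp only
        funext v
        by_cases hv : v = w
        · simp [hv]
        · rw [if_neg hv, if_neg hv]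
          by_cases hn : σ v = VStatus.neutral
          · have hiff : (graphOfConfig ω).Adj w v ↔ (graphOfConfig ω₀).Adj w v := by
              have he : s(w, v) ∈ freshEdges σ :=
                mem_freshEdges.mpr ⟨w, v, hw, hn, hv, rfl⟩
              have := hfresh _ he
              show (w ≠ v ∧ ω s(w,v) = true) ↔ (w ≠ v ∧ ω₀ s(w,v) = true)
              rw [this]
            by_cases ha : (graphOfConfig ω₀).Adj w v
            · rw [if_pos ⟨hn, hiff.mpr ha⟩, if_pos ⟨hn, ha⟩]
            · rw [if_neg (fun hc => ha (hiff.mp hc.2)), if_neg (fun hc => ha hc.2)]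
          · rw [if_neg (fun hc => hn hc.1), if_neg (fun hc => hn hc.1)]
    refine ⟨hstep, ?_⟩
    rw [revealedSet_succ, revealedSet_succ, hrev, hstate]

example : True := trivial

noncomputable def Yc (ω : Cfg n) (t : ℕ) : ℕ :=
  (Finset.univ.filter fun v => exploreState (graphOfConfig ω) t v ≠ VStatus.neutral).card

lemma Yc_add_neutral (ω : Cfg n) (t : ℕ) :
    neutralCount (graphOfConfig ω) t + Yc ω t = n := by
  classical
  have := Finset.card_filter_add_card_filter_not
    (s := (Finset.univ : Finset (Fin n)))
    (p := fun v => exploreState (graphOfConfig ω) t v = VStatus.neutral)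
  simpa [neutralCount, Yc, Finset.card_univ] using this

lemma Yc_zero_le (ω : Cfg n) : Yc ω 0 ≤ 1 := by
  classical
  rw [Yc, Finset.card_le_one]
  intro a ha b hb
  simp only [Finset.mem_filter, Finset.mem_univ, true_and] at ha hb
  have h0 : ∀ v : Fin n, exploreState (graphOfConfig ω) 0 v ≠ VStatus.neutral → v.val = 0 := by
    intro v hv
    by_contra h
    exact hv (by simp [exploreState, h])
  exact Fin.ext ((h0 a ha).trans (h0 b hb).symm)

open scoped Classical in
noncomputable def etaC (ω : Cfg n) (σ : Fin n → VStatus) (w : Fin n) : ℕ :=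
  (Finset.univ.filter fun v => σ v = VStatus.neutral ∧ v ≠ w ∧ ω s(w, v) = true).card

open scoped Classical in
lemma Yc_succ_le (ω : Cfg n) (t : ℕ) {w : Fin n}
    (hw : exploreTarget (exploreState (graphOfConfig ω) t) = some w) :
    Yc ω (t + 1) ≤ Yc ω t + 1 + etaC ω (exploreState (graphOfConfig ω) t) w := by
  classical
  set G := graphOfConfig ω
  set σ := exploreState G t with hσ
  have hsub : (Finset.univ.filter fun v => exploreState G (t+1) v ≠ VStatus.neutral) ⊆
      ((Finset.univ.filter fun v => σ v ≠ VStatus.neutral) ∪ {w}) ∪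
        (Finset.univ.filter fun v => σ v = VStatus.neutral ∧ v ≠ w ∧ ω s(w, v) = true) := by
    intro v hv
    simp only [Finset.mem_filter, Finset.mem_univ, true_and] at hv
    rw [exploreState_succ] at hv
    simp only [Finset.mem_union, Finset.mem_filter, Finset.mem_singleton, Finset.mem_univ,
      true_and]
    by_cases hn : σ v = VStatus.neutral
    · rcases exploreStep_cases G σ v with h' | ⟨w', hw', ⟨hvw, _⟩ | ⟨_, hadj, _⟩⟩
      · exact absurd (h'.trans hn) hv
      · rw [hw] at hw'; obtain rfl : w = w' := by simpa using hw'
        exact Or.inl (Or.inr hvw)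
      · rw [hw] at hw'; obtain rfl : w = w' := by simpa using hw'
        exact Or.inr ⟨hn, fun hvw => ((hvw ▸ hadj).ne rfl).elim, hadj.2⟩
    · exact Or.inl (Or.inl hn)
  calc Yc ω (t+1) ≤ _ := Finset.card_le_card hsub
    _ ≤ ((Finset.univ.filter fun v => σ v ≠ VStatus.neutral) ∪ {w}).card + etaC ω σ w :=
        Finset.card_union_le _ _
    _ ≤ Yc ω t + 1 + etaC ω σ w := by
        have := Finset.card_union_le (Finset.univ.filter fun v => σ v ≠ VStatus.neutral)
          ({w} : Finset (Fin n))
        simp only [Finset.card_singleton] at this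
        exact Nat.add_le_add_right this _

lemma Yc_succ_none (ω : Cfg n) (t : ℕ)
    (hw : exploreTarget (exploreState (graphOfConfig ω) t) = none) :
    Yc ω (t + 1) = Yc ω t := by
  unfold Yc
  rw [exploreState_succ, exploreStep_none hw]

-- weight functions
def edgeW (p : ℝ) (x : Bool) : ℝ := if x then p else 1 - p

noncomputable def Pw (p : ℝ) (ω : Cfg n) : ℝ := ∏ e : Sym2 (Fin n), edgeW p (ω e)

lemma edgeW_nonneg {p : ℝ} (hp0 : 0 ≤ p) (hp1 : p ≤ 1) (x : Bool) : 0 ≤ edgeW p x := by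
  cases x <;> simp [edgeW, hp0] <;> linarith

lemma Pw_nonneg {p : ℝ} (hp0 : 0 ≤ p) (hp1 : p ≤ 1) (ω : Cfg n) : 0 ≤ Pw p ω :=
  Finset.prod_nonneg fun e _ => edgeW_nonneg hp0 hp1 _

lemma sum_prod_bool (g : Sym2 (Fin n) → Bool → ℝ) :
    ∑ ω : Cfg n, ∏ e, g e (ω e) = ∏ e, (g e true + g e false) := by
  classical
  rw [← Fintype.piFinset_univ, Finset.sum_prod_piFinset]
  congr 1
  funext e
  simp [Fintype.sum_bool]

lemma sum_cylinder (g : Sym2 (Fin n) → Bool → ℝ) (R : Finset (Sym2 (Fin n))) (b : Cfg n) :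
    ∑ ω ∈ Finset.univ.filter (fun ω : Cfg n => ∀ e ∈ R, ω e = b e), ∏ e, g e (ω e)
      = (∏ e ∈ R, g e (b e)) * ∏ e ∈ Rᶜ, (g e true + g e false) := by
  classical
  set g' : Sym2 (Fin n) → Bool → ℝ :=
    fun e x => if e ∈ R then (if x = b e then g e x else 0) else g e x with hg'
  have h2 : ∏ e, (g' e true + g' e false)
      = (∏ e ∈ R, g e (b e)) * ∏ e ∈ Rᶜ, (g e true + g e false) := by
    rw [← Finset.prod_mul_prod_compl R]
    congr 1
    · refine Finset.prod_congr rfl fun e he => ?_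
      simp only [hg', if_pos he]
      cases hbe : b e <;> simp [hbe]
    · refine Finset.prod_congr rfl fun e he => ?_
      simp [hg', Finset.mem_compl.mp he]
  have h3 : ∑ ω : Cfg n, ∏ e, g' e (ω e)
      = ∑ ω ∈ Finset.univ.filter (fun ω : Cfg n => ∀ e ∈ R, ω e = b e), ∏ e, g e (ω e) := by
    rw [Finset.sum_filter]
    refine Finset.sum_congr rfl fun ω _ => ?_
    by_cases hω : ∀ e ∈ R, ω e = b e
    · rw [if_pos hω]
      refine Finset.prod_congr rfl fun e _ => ?_
      by_cases he : e ∈ R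
      · simp [hg', he, hω e he]
      · simp [hg', he]
    · rw [if_neg hω]
      push_neg at hω
      obtain ⟨e, heR, hne⟩ := hω
      exact Finset.prod_eq_zero (Finset.mem_univ e) (by simp [hg', heR, hne])
  rw [← h3, sum_prod_bool g', h2]

lemma sum_Pw_eq_one {p : ℝ} (hp1 : p ≤ 1) :
    ∑ ω : Cfg n, Pw p ω = 1 := by
  unfold Pw
  rw [sum_prod_bool]
  simp [edgeW]

example : True := trivial

lemma Yc_eq_of_state {ω ω' : Cfg n} {t : ℕ}
    (h : exploreState (graphOfConfig ω') t = exploreState (graphOfConfig ω) t) :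
    Yc ω' t = Yc ω t := by
  unfold Yc; rw [h]

open scoped Classical in
lemma eta_pow_eq_prod (ω : Cfg n) (σ : Fin n → VStatus) (w : Fin n) :
    (2:ℝ) ^ (etaC ω σ w) = ∏ e : Sym2 (Fin n),
      (if e ∈ (Finset.univ.filter fun v => σ v = VStatus.neutral ∧ v ≠ w).image
          (fun v => s(w, v)) ∧ ω e = true then 2 else 1) := by
  classical
  set Neu := Finset.univ.filter fun v => σ v = VStatus.neutral ∧ v ≠ w with hNeu
  set S := Neu.image fun v => s(w, v) with hS
  have h1 : ∏ e : Sym2 (Fin n), (if e ∈ S ∧ ω e = true then 2 else (1:ℝ))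
      = ∏ e ∈ S, (if e ∈ S ∧ ω e = true then 2 else (1:ℝ)) :=
    (Finset.prod_subset (Finset.subset_univ S)
      (fun e _ he => by simp [he])).symm
  have h1' : ∏ e ∈ S, (if e ∈ S ∧ ω e = true then 2 else (1:ℝ))
      = ∏ e ∈ S, (if ω e = true then 2 else (1:ℝ)) :=
    Finset.prod_congr rfl fun e he => by simp [he]
  have h2 : ∏ e ∈ S, (if ω e = true then 2 else (1:ℝ))
      = 2 ^ (S.filter fun e => ω e = true).card := by
    rw [Finset.prod_ite (fun _ => (2:ℝ)) (fun _ => (1:ℝ)), Finset.prod_const,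
      Finset.prod_const, one_pow, mul_one]
  have h3 : (S.filter fun e => ω e = true).card = etaC ω σ w := by
    unfold etaC
    have himg : S.filter (fun e => ω e = true)
        = (Neu.filter fun v => ω s(w, v) = true).image (fun v => s(w, v)) := by
      rw [hS, Finset.filter_image]
    rw [himg, Finset.card_image_of_injOn]
    · rw [hNeu, Finset.filter_filter]
      congr 1
      ext v
      simp [and_assoc]
    · intro u hu v hv huv
      simp only [hNeu, Finset.coe_filter, Finset.mem_filter, Finset.mem_univ, true_and,
        Set.mem_setOf_eq] at hu hv
      rcases Sym2.eq_iff.mp huv with ⟨_, h⟩ | ⟨h1, h2⟩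
      · exact h
      · exact absurd h2 hu.1.2
  rw [h1, h1', h2, h3]

open scoped Classical in
lemma step_sum_bound {p : ℝ} (hp0 : 0 ≤ p) (hp1 : p ≤ 1) (t : ℕ) :
    ∑ ω : Cfg n, Pw p ω * 2 ^ (Yc ω (t+1)) ≤
      2 * (1+p)^n * ∑ ω : Cfg n, Pw p ω * 2 ^ (Yc ω t) := by
  classical
  have h1p : (1:ℝ) ≤ 1 + p := by linarith
  set Φ : Cfg n → Finset (Sym2 (Fin n)) × Cfg n :=
    fun ω => (revealedSet ω t, fun e => if e ∈ revealedSet ω t then ω e else false) with hΦdef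
  rw [← Finset.sum_fiberwise Finset.univ Φ (fun ω => Pw p ω * 2 ^ (Yc ω (t+1))),
      ← Finset.sum_fiberwise Finset.univ Φ (fun ω => Pw p ω * 2 ^ (Yc ω t)),
      Finset.mul_sum]
  refine Finset.sum_le_sum fun y _ => ?_
  rcases (Finset.univ.filter fun ω => Φ ω = y).eq_empty_or_nonempty with hemp | ⟨ω₀, hω₀⟩
  · simp [hemp]
  have hΦ0 : Φ ω₀ = y := (Finset.mem_filter.mp hω₀).2
  subst hΦ0
  set R := revealedSet ω₀ t with hR
  have hfiber : (Finset.univ.filter fun ω => Φ ω = Φ ω₀)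
      = Finset.univ.filter (fun ω : Cfg n => ∀ e ∈ R, ω e = ω₀ e) := by
    ext ω
    simp only [Finset.mem_filter, Finset.mem_univ, true_and]
    constructor
    · intro h e he
      have h1 : revealedSet ω t = R := congrArg Prod.fst h
      have h2 := congrFun (congrArg Prod.snd h) e
      simp only [hΦdef, h1] at h2
      rw [if_pos he, if_pos he] at h2
      exact h2
    · intro h
      obtain ⟨hstate, hrev⟩ := agree_state t ω₀ ω h
      have hfst : revealedSet ω t = R := hrev
      refine Prod.ext hfst (funext fun e => ?_)
      simp only [hΦdef]
      rw [hfst]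
      by_cases he : e ∈ R
      · rw [if_pos he, if_pos he, h e he]
      · rw [if_neg he, if_neg he]
  rw [hfiber]
  have hstate : ∀ ω' ∈ Finset.univ.filter (fun ω : Cfg n => ∀ e ∈ R, ω e = ω₀ e),
      exploreState (graphOfConfig ω') t = exploreState (graphOfConfig ω₀) t := fun ω' h =>
    (agree_state t ω₀ ω' ((Finset.mem_filter.mp h).2)).1
  set σ := exploreState (graphOfConfig ω₀) t with hσ
  have hsum_nonneg : (0:ℝ) ≤ ∑ ω' ∈ Finset.univ.filter (fun ω : Cfg n => ∀ e ∈ R, ω e = ω₀ e),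
      Pw p ω' * 2 ^ (Yc ω' t) :=
    Finset.sum_nonneg fun ω' _ => mul_nonneg (Pw_nonneg hp0 hp1 _) (by positivity)
  have hconst : (1:ℝ) ≤ 2 * (1+p)^n := by
    have : (1:ℝ) ≤ (1+p)^n := one_le_pow₀ h1p
    nlinarith
  cases hw : exploreTarget σ with
  | none =>
    have heq : ∀ ω' ∈ Finset.univ.filter (fun ω : Cfg n => ∀ e ∈ R, ω e = ω₀ e),
        Pw p ω' * 2 ^ (Yc ω' (t+1)) = Pw p ω' * 2 ^ (Yc ω' t) := by
      intro ω' h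
      rw [Yc_succ_none ω' t (by rw [hstate ω' h]; exact hw)]
    rw [Finset.sum_congr rfl heq]
    nlinarith
  | some w =>
    set Neu := Finset.univ.filter (fun v => σ v = VStatus.neutral ∧ v ≠ w) with hNeu
    set S := Neu.image (fun v => s(w, v)) with hSdef
    have hSfresh : freshEdges σ = S := by
      simp only [freshEdges, hw]
      rfl
    have hdisj : Disjoint S R := hSfresh ▸ fresh_disjoint_revealed ω₀ (le_refl t)
    set g : Sym2 (Fin n) → Bool → ℝ :=
      fun e x => edgeW p x * (if e ∈ S ∧ x = true then 2 else 1) with hg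
    have hpoint : ∀ ω' ∈ Finset.univ.filter (fun ω : Cfg n => ∀ e ∈ R, ω e = ω₀ e),
        Pw p ω' * 2 ^ (Yc ω' (t+1)) ≤ 2 ^ (Yc ω₀ t + 1) * ∏ e, g e (ω' e) := by
      intro ω' h
      have hst : exploreState (graphOfConfig ω') t = σ := hstate ω' h
      have htar : exploreTarget (exploreState (graphOfConfig ω') t) = some w := by
        rw [hst]; exact hw
      have hYt : Yc ω' t = Yc ω₀ t := Yc_eq_of_state (hσ ▸ hst)
      have h1 : Yc ω' (t+1) ≤ Yc ω₀ t + 1 + etaC ω' σ w := by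
        have := Yc_succ_le ω' t htar
        rw [hst] at this
        omega
      have h2 : (2:ℝ) ^ (Yc ω' (t+1)) ≤ 2 ^ (Yc ω₀ t + 1) * 2 ^ (etaC ω' σ w) := by
        rw [← pow_add]
        exact pow_le_pow_right₀ one_le_two h1
      have h3 : (2:ℝ) ^ (etaC ω' σ w) = ∏ e, (if e ∈ S ∧ ω' e = true then 2 else (1:ℝ)) := by
        rw [eta_pow_eq_prod ω' σ w]
      calc Pw p ω' * 2 ^ (Yc ω' (t+1))
          ≤ Pw p ω' * (2 ^ (Yc ω₀ t + 1) * 2 ^ (etaC ω' σ w)) :=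
            mul_le_mul_of_nonneg_left h2 (Pw_nonneg hp0 hp1 _)
        _ = 2 ^ (Yc ω₀ t + 1) * (Pw p ω' * 2 ^ (etaC ω' σ w)) := by ring
        _ = 2 ^ (Yc ω₀ t + 1) * ∏ e, g e (ω' e) := by
            rw [h3, hg]
            congr 1
            rw [Pw, ← Finset.prod_mul_distrib]
    have hcyl := sum_cylinder g R ω₀
    have hcylP := sum_cylinder (fun e x => edgeW p x) R ω₀
    have hgR : ∏ e ∈ R, g e (ω₀ e) = ∏ e ∈ R, edgeW p (ω₀ e) := by
      refine Finset.prod_congr rfl fun e he => ?_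
      have heS : e ∉ S := Finset.disjoint_right.mp hdisj he
      simp [hg, heS]
    have hgC : ∏ e ∈ Rᶜ, (g e true + g e false) ≤ (1+p)^n := by
      have hval : ∀ e, g e true + g e false = if e ∈ S then 1 + p else 1 := by
        intro e
        by_cases he : e ∈ S <;> simp [hg, edgeW, he] <;> ring
      calc ∏ e ∈ Rᶜ, (g e true + g e false) = ∏ e ∈ Rᶜ, (if e ∈ S then 1 + p else 1) :=
            Finset.prod_congr rfl fun e _ => hval e
        _ = (1+p) ^ (Rᶜ.filter fun e => e ∈ S).card := by
            rw [Finset.prod_ite (fun _ => (1+p:ℝ)) (fun _ => (1:ℝ)), Finset.prod_const,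
              Finset.prod_const, one_pow, mul_one]
        _ ≤ (1+p) ^ n := by
            apply pow_le_pow_right₀ h1p
            calc (Rᶜ.filter fun e => e ∈ S).card ≤ S.card := by
                  apply Finset.card_le_card
                  intro e he
                  exact (Finset.mem_filter.mp he).2
              _ ≤ Neu.card := Finset.card_image_le
              _ ≤ Finset.univ.card := Finset.card_le_card (Finset.filter_subset _ _)
              _ = n := by simp
    have hPR : (0:ℝ) ≤ ∏ e ∈ R, edgeW p (ω₀ e) :=
      Finset.prod_nonneg fun e _ => edgeW_nonneg hp0 hp1 _
    have hfibsum : ∑ ω' ∈ Finset.univ.filter (fun ω : Cfg n => ∀ e ∈ R, ω e = ω₀ e),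
        Pw p ω' * 2 ^ (Yc ω' t) = 2 ^ (Yc ω₀ t) * ∏ e ∈ R, edgeW p (ω₀ e) := by
      have heq : ∀ ω' ∈ Finset.univ.filter (fun ω : Cfg n => ∀ e ∈ R, ω e = ω₀ e),
          Pw p ω' * 2 ^ (Yc ω' t) = 2 ^ (Yc ω₀ t) * Pw p ω' := by
        intro ω' h
        rw [Yc_eq_of_state (hσ ▸ hstate ω' h)]
        ring
      rw [Finset.sum_congr rfl heq, ← Finset.mul_sum]
      congr 1
      have : ∑ ω' ∈ Finset.univ.filter (fun ω : Cfg n => ∀ e ∈ R, ω e = ω₀ e), Pw p ω'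
          = (∏ e ∈ R, edgeW p (ω₀ e)) * ∏ e ∈ Rᶜ, (edgeW p true + edgeW p false) := hcylP
      rw [this]
      have : ∀ e : Sym2 (Fin n), edgeW p true + edgeW p false = 1 := by
        intro e; simp [edgeW]
      simp [edgeW]
    calc ∑ ω' ∈ Finset.univ.filter (fun ω : Cfg n => ∀ e ∈ R, ω e = ω₀ e),
          Pw p ω' * 2 ^ (Yc ω' (t+1))
        ≤ ∑ ω' ∈ Finset.univ.filter (fun ω : Cfg n => ∀ e ∈ R, ω e = ω₀ e),
            2 ^ (Yc ω₀ t + 1) * ∏ e, g e (ω' e) := Finset.sum_le_sum hpoint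
      _ = 2 ^ (Yc ω₀ t + 1) * ((∏ e ∈ R, g e (ω₀ e)) * ∏ e ∈ Rᶜ, (g e true + g e false)) := by
          rw [← Finset.mul_sum, hcyl]
      _ ≤ 2 ^ (Yc ω₀ t + 1) * ((∏ e ∈ R, edgeW p (ω₀ e)) * (1+p)^n) := by
          rw [hgR]
          apply mul_le_mul_of_nonneg_left _ (by positivity)
          exact mul_le_mul_of_nonneg_left hgC hPR
      _ = 2 * (1+p)^n * (2 ^ (Yc ω₀ t) * ∏ e ∈ R, edgeW p (ω₀ e)) := by ring
      _ = 2 * (1+p)^n * ∑ ω' ∈ Finset.univ.filter (fun ω : Cfg n => ∀ e ∈ R, ω e = ω₀ e),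
            Pw p ω' * 2 ^ (Yc ω' t) := by rw [hfibsum]

example : True := trivial

lemma key_bound {p : ℝ} (hp0 : 0 ≤ p) (hp1 : p ≤ 1) (t : ℕ) :
    ∑ ω : Cfg n, Pw p ω * 2 ^ (Yc ω t) ≤ 2 ^ (t+1) * (1+p) ^ (n*t) := by
  induction t with
  | zero =>
    have hle : ∀ ω : Cfg n, Pw p ω * 2 ^ (Yc ω 0) ≤ Pw p ω * 2 := fun ω => by
      have h2 : (2:ℝ) ^ (Yc ω 0) ≤ 2 ^ 1 := pow_le_pow_right₀ one_le_two (Yc_zero_le ω)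
      have := mul_le_mul_of_nonneg_left h2 (Pw_nonneg hp0 hp1 ω)
      simpa using this
    calc ∑ ω : Cfg n, Pw p ω * 2 ^ (Yc ω 0) ≤ ∑ ω : Cfg n, Pw p ω * 2 :=
          Finset.sum_le_sum fun ω _ => hle ω
      _ = 2 := by rw [← Finset.sum_mul, sum_Pw_eq_one hp1]; ring
      _ ≤ 2 ^ (0+1) * (1+p) ^ (n*0) := by simp
  | succ t ih =>
    have h1p : (1:ℝ) ≤ 1 + p := by linarith
    calc ∑ ω : Cfg n, Pw p ω * 2 ^ (Yc ω (t+1))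
        ≤ 2 * (1+p)^n * ∑ ω : Cfg n, Pw p ω * 2 ^ (Yc ω t) := step_sum_bound hp0 hp1 t
      _ ≤ 2 * (1+p)^n * (2 ^ (t+1) * (1+p) ^ (n*t)) := by
          apply mul_le_mul_of_nonneg_left ih
          positivity
      _ = 2 ^ (t+1+1) * (1+p) ^ (n*(t+1)) := by
          rw [Nat.mul_succ, pow_add, pow_add]
          ring
lemma markov_bound {p : ℝ} (hp0 : 0 ≤ p) (hp1 : p ≤ 1) (t : ℕ) :
    ∑ ω ∈ Finset.univ.filter (fun ω : Cfg n => 5*t ≤ Yc ω t), Pw p ω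
      ≤ 2 ^ (t+1) * (1+p) ^ (n*t) / 2 ^ (5*t) := by
  rw [le_div_iff₀ (by positivity)]
  calc (∑ ω ∈ Finset.univ.filter (fun ω : Cfg n => 5*t ≤ Yc ω t), Pw p ω) * 2 ^ (5*t)
      = ∑ ω ∈ Finset.univ.filter (fun ω : Cfg n => 5*t ≤ Yc ω t), Pw p ω * 2 ^ (5*t) :=
        Finset.sum_mul _ _ _
    _ ≤ ∑ ω ∈ Finset.univ.filter (fun ω : Cfg n => 5*t ≤ Yc ω t), Pw p ω * 2 ^ (Yc ω t) := by
        refine Finset.sum_le_sum fun ω hω => ?_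
        have h5 : 5*t ≤ Yc ω t := (Finset.mem_filter.mp hω).2
        exact mul_le_mul_of_nonneg_left (pow_le_pow_right₀ one_le_two h5) (Pw_nonneg hp0 hp1 ω)
    _ ≤ ∑ ω : Cfg n, Pw p ω * 2 ^ (Yc ω t) := by
        refine Finset.sum_le_sum_of_subset_of_nonneg (Finset.subset_univ _) fun ω _ _ => ?_
        exact mul_nonneg (Pw_nonneg hp0 hp1 ω) (by positivity)
    _ ≤ 2 ^ (t+1) * (1+p) ^ (n*t) := key_bound hp0 hp1 t

lemma gnp_singleton {p : ℝ} (hp0 : 0 ≤ p) (hp1 : p ≤ 1) (ω : Cfg n) :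
    gnp n p {ω} = ENNReal.ofReal (Pw p ω) := by
  have hpi : ({ω} : Set (Cfg n)) = Set.pi Set.univ (fun e => {ω e}) :=
    (Set.univ_pi_singleton ω).symm
  rw [gnp, hpi, Measure.pi_pi]
  have hb : ∀ x : Bool, bernoulliMeasure p {x} = ENNReal.ofReal (edgeW p x) := by
    intro x
    cases x <;>
      simp [bernoulliMeasure, edgeW, Measure.dirac_apply]
  simp_rw [hb]
  rw [← ENNReal.ofReal_prod_of_nonneg fun e _ => edgeW_nonneg hp0 hp1 (ω e)]
  rfl

lemma gnp_finset {p : ℝ} (hp0 : 0 ≤ p) (hp1 : p ≤ 1) (A : Finset (Cfg n)) :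
    gnp n p (A : Set (Cfg n)) = ENNReal.ofReal (∑ ω ∈ A, Pw p ω) := by
  classical
  have hA : (A : Set (Cfg n)) = ⋃ ω ∈ A, ({ω} : Set (Cfg n)) := by
    ext x; simp
  rw [hA, measure_biUnion_finset ?hd ?hm]
  · rw [ENNReal.ofReal_sum_of_nonneg fun ω _ => Pw_nonneg hp0 hp1 ω]
    exact Finset.sum_congr rfl fun ω _ => gnp_singleton hp0 hp1 ω
  case hd =>
    intro x _ y _ hxy
    simp [Set.disjoint_singleton, hxy]
  case hm =>
    intro ω _
    exact MeasurableSet.singleton ω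

example : True := trivial

lemma numeric_bound {p : ℝ} {m t : ℕ} (hp0 : 0 ≤ p) (hnp : p * m ≤ 2) (ht : 1 ≤ t) :
    2 ^ (t+1) * (1+p) ^ (m*t) / 2 ^ (5*t) ≤ Real.exp (-(1/100) * t) := by
  have hlog1 : Real.log 2 < 0.6931471808 := Real.log_two_lt_d9
  have hlog2 : 0.6931471803 < Real.log 2 := Real.log_two_gt_d9
  have ht1 : (1:ℝ) ≤ t := by exact_mod_cast ht
  have h2exp : ∀ k : ℕ, (2:ℝ) ^ k = Real.exp (k * Real.log 2) := fun k => by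
    rw [Real.exp_nat_mul, Real.exp_log two_pos]
  have h1 : (1+p) ^ (m*t) ≤ Real.exp (2*t) := by
    have ha : (1+p) ≤ Real.exp p := by
      have := Real.add_one_le_exp p
      linarith
    calc (1+p) ^ (m*t) ≤ (Real.exp p) ^ (m*t) :=
          pow_le_pow_left₀ (by linarith) ha _
      _ = Real.exp ((m*t : ℕ) * p) := (Real.exp_nat_mul p (m*t)).symm
      _ ≤ Real.exp (2*t) := by
          apply Real.exp_le_exp.mpr
          push_cast
          nlinarith [ht1, mul_le_mul_of_nonneg_right hnp (le_trans zero_le_one ht1)]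
  rw [div_le_iff₀ (by positivity)]
  calc 2^(t+1) * (1+p)^(m*t)
      ≤ Real.exp ((t+1 : ℕ) * Real.log 2) * Real.exp (2*t) := by
        rw [← h2exp]
        exact mul_le_mul_of_nonneg_left h1 (by positivity)
    _ = Real.exp ((t+1 : ℕ)*Real.log 2 + 2*t) := (Real.exp_add _ _).symm
    _ ≤ Real.exp (-(1/100)*t + (5*t : ℕ)*Real.log 2) := by
        apply Real.exp_le_exp.mpr
        push_cast
        nlinarith [ht1, hlog1, hlog2,
          mul_le_mul_of_nonneg_left (le_of_lt hlog2) (sub_nonneg.mpr ht1)]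
    _ = Real.exp (-(1/100)*t) * 2^(5*t) := by rw [Real.exp_add, h2exp]


/-- **Lemma 3 of Nachmias–Peres.**  There is a constant `c > 0` such that for every `n`, every
edge probability `p ≤ 2/n` and every positive integer `t`, the number `N_t` of neutral vertices
after `t` steps of the exploration process of `G(n,p)` satisfies
`P(N_t ≤ n - 5t) ≤ e^{-ct}`. -/
theorem exploration_neutral_lower_bound :
    ∃ c : ℝ, 0 < c ∧ ∀ (n : ℕ) (p : ℝ), 0 ≤ p → p ≤ 2 / n → ∀ t : ℕ, 0 < t →
      gnp n p {ω | (neutralCount (graphOfConfig ω) t : ℤ) ≤ (n : ℤ) - 5 * t} ≤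
        ENNReal.ofReal (Real.exp (-c * t)) := by
  classical
  refine ⟨1/100, by norm_num, fun n p hp0 hp2 t ht => ?_⟩
  by_cases hn5 : 5*t ≤ n
  · have hn0 : 0 < n := lt_of_lt_of_le (by omega) hn5
    have hn2 : (2:ℝ) ≤ n := by
      have : (5:ℕ) ≤ n := le_trans (by omega) hn5
      exact_mod_cast le_trans (by norm_num) this
    have hp1 : p ≤ 1 := le_trans hp2 ((div_le_one (by linarith)).mpr hn2)
    have hnp : p * n ≤ 2 := by
      have hn0' : (0:ℝ) < n := by positivity
      calc p * n ≤ (2/n) * n := mul_le_mul_of_nonneg_right hp2 (le_of_lt hn0')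
        _ = 2 := div_mul_cancel₀ 2 (ne_of_gt hn0')
    have hset : {ω | (neutralCount (graphOfConfig ω) t : ℤ) ≤ (n : ℤ) - 5 * t}
        = ((Finset.univ.filter fun ω : Cfg n => 5*t ≤ Yc ω t) : Set (Cfg n)) := by
      ext ω
      simp only [Set.mem_setOf_eq, Finset.coe_filter, Finset.mem_univ, true_and,
        Set.mem_setOf_eq]
      have hNY : neutralCount (graphOfConfig ω) t + Yc ω t = n := Yc_add_neutral ω t
      omega
    rw [hset, gnp_finset hp0 hp1]
    apply ENNReal.ofReal_le_ofReal
    exact (markov_bound hp0 hp1 t).trans (numeric_bound hp0 hnp (by omega))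
  · have hset : {ω | (neutralCount (graphOfConfig ω) t : ℤ) ≤ (n : ℤ) - 5 * t}
        = (∅ : Set (Cfg n)) := by
      ext ω
      simp only [Set.mem_setOf_eq, Set.mem_empty_iff_false, iff_false, not_le]
      have : (0:ℤ) ≤ (neutralCount (graphOfConfig ω) t : ℤ) := by positivity
      omega
    rw [hset]
    simp
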